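/- Let r be a positive integer and let R := Z[X]/(X^r − 1). Write φ and ψ for the images in R of Φ_r(X) and Ψ_r(X) respectively. Then the annihilator in R of the principal ideal ψ·R is the principal ideal φ·R, and the annihilator in R of the principal ideal φ·R is the principal ideal ψ·R. -/

import Mathlib

open Polynomial

noncomputable section

/-- `Ψ_r(X) := (X^r − 1)/Φ_r(X) ∈ ℤ[X]`. -/
def PsiPoly (r : ℕ) : ℤ[X] := (X ^ r - 1) /ₘ cyclotomic r ℤ

/-- In `R := ℤ[X]/(X^r − 1)`, with `φ` and `ψ` the images of
`Φ_r` and `Ψ_r`, the annihilator of the ideal `(ψ)` is the ideal `(φ)`, and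
the annihilator of the ideal `(φ)` is the ideal `(ψ)`. -/
theorem stmt_6 (r : ℕ) (hr : 0 < r) :
    let R := ℤ[X] ⧸ Ideal.span {(X : ℤ[X]) ^ r - 1}
    let mk : ℤ[X] →+* R := Ideal.Quotient.mk (Ideal.span {(X : ℤ[X]) ^ r - 1})
    let φ : R := mk (cyclotomic r ℤ)
    let ψ : R := mk (PsiPoly r)
    (Ideal.span {ψ} : Ideal R).annihilator = Ideal.span {φ} ∧
    (Ideal.span {φ} : Ideal R).annihilator = Ideal.span {ψ} := by
  intro R mk φ ψ
  have hΦm : (cyclotomic r ℤ).Monic := cyclotomic.monic r ℤ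
  have hdvd : cyclotomic r ℤ ∣ X ^ r - 1 := cyclotomic.dvd_X_pow_sub_one r ℤ
  have h0 : (X ^ r - 1 : ℤ[X]) %ₘ cyclotomic r ℤ = 0 :=
    (modByMonic_eq_zero_iff_dvd hΦm).mpr hdvd
  have key : cyclotomic r ℤ * PsiPoly r = X ^ r - 1 := by
    conv_rhs => rw [← modByMonic_add_div (X ^ r - 1 : ℤ[X]) (cyclotomic r ℤ)]
    rw [h0, zero_add, PsiPoly]
  have hXne : ((X : ℤ[X]) ^ r - 1) ≠ 0 := by
    have := X_pow_sub_C_ne_zero hr (1 : ℤ)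
    simpa using this
  have hΨ : PsiPoly r ≠ 0 := by
    intro h
    rw [h, mul_zero] at key
    exact hXne key.symm
  have hΦ : cyclotomic r ℤ ≠ 0 := cyclotomic_ne_zero r ℤ
  have main : ∀ f g : ℤ[X], g ≠ 0 → f * g = X ^ r - 1 →
      (Ideal.span {mk g} : Ideal R).annihilator = Ideal.span {mk f} := by
    intro f g hg hfg
    ext x
    obtain ⟨p, rfl⟩ := Ideal.Quotient.mk_surjective x
    have hspan : (Ideal.span {mk g} : Ideal R) = Submodule.span R {mk g} := rfl
    rw [hspan, Submodule.mem_annihilator_span_singleton, smul_eq_mul, ← map_mul,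
      Ideal.Quotient.eq_zero_iff_mem, Ideal.mem_span_singleton]
    constructor
    · intro h
      rw [← hfg] at h
      have hfp : f ∣ p := (mul_dvd_mul_iff_right hg).mp h
      exact Ideal.mem_span_singleton.mpr (map_dvd mk hfp)
    · intro h
      obtain ⟨y, hy⟩ := Ideal.mem_span_singleton.mp h
      obtain ⟨q, rfl⟩ := Ideal.Quotient.mk_surjective y
      have hpq : ((X : ℤ[X]) ^ r - 1) ∣ p - f * q := by
        rw [← Ideal.mem_span_singleton, ← Ideal.Quotient.eq_zero_iff_mem,
          map_sub, map_mul]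
        rw [hy]; ring
      have : p * g = (p - f * q) * g + (f * g) * q := by ring
      rw [this, hfg]
      exact dvd_add (Dvd.dvd.mul_right hpq g) (Dvd.intro q rfl)
  exact ⟨main _ _ hΨ key, main _ _ hΦ (by rw [mul_comm]; exact key)⟩

end
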